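/- Let G be a nontrivial abelian metrizable group, X a G-Tychonoff first countable space, g ∈ G nonzero, and H a subspace of G^X containing σ(𝟎, g) ∪ {𝐠}. Then H is metrizable if and only if X is countable. -/

import Mathlib

open Filter Topology

/-- `X` is `G`-Tychonoff: every point outside a closed set can be completely separated
from it by a continuous `G`-valued function taking prescribed (distinct) values. -/
def GTychonoff (X G : Type*) [TopologicalSpace X] [TopologicalSpace G] : Prop :=
  ∀ A : Set X, IsClosed A → ∀ x ∉ A, ∀ y z : G, y ≠ z →
    ∃ f : X → G, Continuous f ∧ f x = y ∧ ∀ a ∈ A, f a = z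

/-- Let `G` be a nontrivial abelian metrizable group, `X` a `G`-Tychonoff first countable
space, `g ≠ 0`, and `H ⊆ G^X` containing `σ(𝟎, g) ∪ {𝐠}`. Then `H` is metrizable iff
`X` is countable. -/
theorem stmt17 {G X : Type*} [AddCommGroup G] [TopologicalSpace G] [IsTopologicalAddGroup G]
    [TopologicalSpace.MetrizableSpace G]
    [TopologicalSpace X] [FirstCountableTopology X]
    (hXG : GTychonoff X G) (g : G) (hg : g ≠ 0)
    (H : Set (X → G))
    (hσ : {h : X → G | {x | h x ≠ 0}.Finite ∧ ∀ x, h x ≠ 0 → h x = g} ⊆ H)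
    (hconst : (fun _ : X => g) ∈ H) :
    TopologicalSpace.MetrizableSpace ↥H ↔ Countable X := by

  classical
  letI : MetricSpace G := TopologicalSpace.metrizableSpaceMetric G
  constructor
  · intro hH
    haveI := hH
    by_contra hX
    set S : Set (X → G) :=
      {h : X → G | {x | h x ≠ 0}.Finite ∧ ∀ x, h x ≠ 0 → h x = g} with hSdef
    set pg : ↥H := ⟨fun _ => g, hconst⟩ with hpg
    have hcl : pg ∈ closure (Subtype.val ⁻¹' S) := by
      rw [mem_closure_iff_nhds]
      intro t ht
      rw [nhds_subtype_eq_comap, Filter.mem_comap] at ht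
      obtain ⟨U, hU, hUt⟩ := ht
      rw [nhds_pi, Filter.mem_pi] at hU
      obtain ⟨I, hIfin, V, hV, hVsub⟩ := hU
      set h : X → G := fun x => if x ∈ I then g else 0 with hhdef
      have hS : h ∈ S := by
        constructor
        · refine hIfin.subset fun x hx => ?_
          by_contra hxI
          simp [hhdef, hxI] at hx
        · intro x hx
          by_cases hxI : x ∈ I <;> simp [hhdef, hxI] at hx ⊢
      have hhU : h ∈ U := by
        refine hVsub fun x hx => ?_
        have := mem_of_mem_nhds (hV x)
        simpa [hhdef, hx] using this
      exact ⟨⟨h, hσ hS⟩, hUt hhU, hS⟩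
    obtain ⟨u, hu, hlim⟩ := mem_closure_iff_seq_limit.mp hcl
    have hcnt : (⋃ n, {x | (u n : X → G) x ≠ 0}).Countable :=
      Set.countable_iUnion fun n => ((hu n).1).countable
    have hex : ∃ x, ∀ n, (u n : X → G) x = 0 := by
      by_contra hall
      push_neg at hall
      apply hX
      rw [← Set.countable_univ_iff]
      refine hcnt.mono fun x _ => ?_
      obtain ⟨n, hn⟩ := hall x
      exact Set.mem_iUnion.mpr ⟨n, hn⟩
    obtain ⟨x, hx⟩ := hex
    have hev : Filter.Tendsto (fun n => (u n : X → G) x) Filter.atTop (𝓝 g) := by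
      have hc : Continuous fun f : ↥H => (f : X → G) x :=
        (continuous_apply x).comp continuous_subtype_val
      have := (hc.continuousAt (x := pg)).tendsto.comp hlim
      simpa [hpg, Function.comp_def] using this
    have : Filter.Tendsto (fun _ : ℕ => (0 : G)) Filter.atTop (𝓝 g) := by
      simpa [hx] using hev
    exact hg (tendsto_nhds_unique this tendsto_const_nhds)
  · intro hX
    haveI := hX
    letI : UniformSpace (X → G) := Pi.uniformSpace _
    haveI : TopologicalSpace.MetrizableSpace (X → G) := UniformSpace.metrizableSpace
    infer_instance
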